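/- Let M' = ⟨(1,0), (1,1)⟩ and M = M' ∪ (ℤ × {n ∈ ℤ : n ≥ 2}) as an additive submonoid of ℤ². Then M is reduced, its set of atoms is exactly {(1,0), (1,1)}, the submonoid generated by the atoms equals {(x,y) ∈ ℤ² : 0 ≤ y ≤ x}, and M is almost atomic but not nearly atomic. -/

import Mathlib

/-- An element of ℤ² invertible within the submonoid M. -/
def IsUnitIn (M : AddSubmonoid (ℤ × ℤ)) (x : ℤ × ℤ) : Prop :=
  x ∈ M ∧ -x ∈ M

/-- An atom of the submonoid M of ℤ². -/
def IsAtomIn (M : AddSubmonoid (ℤ × ℤ)) (a : ℤ × ℤ) : Prop :=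
  a ∈ M ∧ ¬ IsUnitIn M a ∧
    ∀ r s : ℤ × ℤ, r ∈ M → s ∈ M → a = r + s → IsUnitIn M r ∨ IsUnitIn M s

/-- The submonoid generated by the atoms of M. -/
def AtomicElems (M : AddSubmonoid (ℤ × ℤ)) : AddSubmonoid (ℤ × ℤ) :=
  AddSubmonoid.closure {a : ℤ × ℤ | IsAtomIn M a}

lemma mem_cl_iff (p : ℤ × ℤ) :
    p ∈ AddSubmonoid.closure {((1:ℤ),(0:ℤ)), ((1:ℤ),(1:ℤ))} ↔ 0 ≤ p.2 ∧ p.2 ≤ p.1 := by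
  constructor
  · intro hp
    induction hp using AddSubmonoid.closure_induction with
    | mem x hx => rcases hx with h | h <;> subst h <;> simp
    | zero => simp
    | add x y _ _ hx hy =>
        simp only [Prod.fst_add, Prod.snd_add]
        omega
  · rintro ⟨h1, h2⟩
    have m1 : ((1:ℤ),(0:ℤ)) ∈ AddSubmonoid.closure {((1:ℤ),(0:ℤ)), ((1:ℤ),(1:ℤ))} :=
      AddSubmonoid.subset_closure (Set.mem_insert _ _)
    have m2 : ((1:ℤ),(1:ℤ)) ∈ AddSubmonoid.closure {((1:ℤ),(0:ℤ)), ((1:ℤ),(1:ℤ))} :=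
      AddSubmonoid.subset_closure (Set.mem_insert_iff.mpr (Or.inr rfl))
    have a1 := AddSubmonoid.nsmul_mem _ m1 (p.1 - p.2).toNat
    have a2 := AddSubmonoid.nsmul_mem _ m2 p.2.toNat
    have h := add_mem a1 a2
    convert h using 1
    ext <;> simp [nsmul_eq_mul] <;> omega

theorem M11_almost_atomic_not_nearly_atomic (M : AddSubmonoid (ℤ × ℤ))
    (hM : (M : Set (ℤ × ℤ)) =
      (AddSubmonoid.closure {((1 : ℤ), (0 : ℤ)), ((1 : ℤ), (1 : ℤ))} : Set (ℤ × ℤ))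
        ∪ {p : ℤ × ℤ | 2 ≤ p.2}) :
    (∀ x ∈ M, IsUnitIn M x → x = 0) ∧
    ({a : ℤ × ℤ | IsAtomIn M a} = {((1 : ℤ), (0 : ℤ)), ((1 : ℤ), (1 : ℤ))}) ∧
    ((AtomicElems M : Set (ℤ × ℤ)) = {p : ℤ × ℤ | 0 ≤ p.2 ∧ p.2 ≤ p.1}) ∧
    (∀ b ∈ M, ¬ IsUnitIn M b →
      ∃ c : ℤ × ℤ, c ∈ AtomicElems M ∧ b + c ∈ AtomicElems M) ∧
    ¬ (∃ b ∈ M, ∀ m ∈ M, b + m ∈ AtomicElems M) := by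
  -- membership characterization
  have memM : ∀ p : ℤ × ℤ, p ∈ M ↔ ((0 ≤ p.2 ∧ p.2 ≤ p.1) ∨ 2 ≤ p.2) := by
    intro p
    have : p ∈ M ↔ p ∈ (M : Set (ℤ × ℤ)) := Iff.rfl
    rw [this, hM]
    simp only [Set.mem_union, Set.mem_setOf_eq, SetLike.mem_coe, mem_cl_iff]
  -- units are zero
  have unit0 : ∀ x : ℤ × ℤ, IsUnitIn M x → x = 0 := by
    rintro x ⟨hx, hnx⟩
    rw [memM] at hx hnx
    simp only [Prod.fst_neg, Prod.snd_neg] at hnx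
    have h1 : x.1 = 0 := by omega
    have h2 : x.2 = 0 := by omega
    exact Prod.ext h1 h2
  have zero_unit : IsUnitIn M 0 := ⟨zero_mem M, by simpa using zero_mem M⟩
  have not_unit : ∀ x : ℤ × ℤ, x ≠ 0 → ¬ IsUnitIn M x := fun x hx h => hx (unit0 x h)
  -- atoms
  have atoms_eq : {a : ℤ × ℤ | IsAtomIn M a} = {((1 : ℤ), (0 : ℤ)), ((1 : ℤ), (1 : ℤ))} := by
    ext a
    simp only [Set.mem_setOf_eq, Set.mem_insert_iff, Set.mem_singleton_iff]
    constructor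
    · rintro ⟨haM, hanu, hsplit⟩
      have ha := (memM a).mp haM
      by_contra hne
      push_neg at hne
      obtain ⟨hne1, hne2⟩ := hne
      -- find a nontrivial splitting
      by_cases h2 : 2 ≤ a.2
      · -- a = (1,0) + (a.1 - 1, a.2)
        have hr : ((1:ℤ),(0:ℤ)) ∈ M := (memM _).mpr (Or.inl ⟨le_refl 0, by norm_num⟩)
        have hs : ((a.1 - 1, a.2) : ℤ × ℤ) ∈ M := (memM _).mpr (Or.inr h2)
        rcases hsplit _ _ hr hs (by ext <;> simp) with h | h
        · have := unit0 _ h; simp [Prod.ext_iff] at this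
        · have := unit0 _ h
          rw [Prod.ext_iff] at this
          simp at this
          omega
      · -- a.2 = 0 or 1, a in closure part
        have hcl : 0 ≤ a.2 ∧ a.2 ≤ a.1 := by omega
        rcases (by omega : a.2 = 0 ∨ a.2 = 1) with h | h
        · -- a.2 = 0, a.1 ≥ 1, a ≠ (1,0) so a.1 ≥ 2
          have ha1 : 1 ≤ a.1 := by
            by_contra h1
            push_neg at h1
            have ha0 : a = 0 := by rw [Prod.ext_iff, Prod.fst_zero, Prod.snd_zero]; omega
            exact hanu (ha0 ▸ zero_unit)
          have ha2 : 2 ≤ a.1 := by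
            rcases eq_or_lt_of_le ha1 with h1 | h1
            · exfalso; exact hne1 (Prod.ext h1.symm h)
            · omega
          have hr : ((1:ℤ),(0:ℤ)) ∈ M := (memM _).mpr (Or.inl ⟨le_refl 0, by norm_num⟩)
          have hs : ((a.1 - 1, 0) : ℤ × ℤ) ∈ M := (memM _).mpr (Or.inl (by constructor <;> omega))
          rcases hsplit _ _ hr hs (by rw [Prod.ext_iff]; constructor <;> simp [h]) with hu | hu
          · have := unit0 _ hu; simp [Prod.ext_iff] at this
          · have := unit0 _ hu; rw [Prod.ext_iff] at this; simp at this; omega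
        · -- a.2 = 1, a.1 ≥ 1, a ≠ (1,1) so a.1 ≥ 2
          have ha2 : 2 ≤ a.1 := by
            rcases eq_or_lt_of_le hcl.2 with h1 | h1
            · exfalso; exact hne2 (Prod.ext (by omega) h)
            · omega
          have hr : ((1:ℤ),(1:ℤ)) ∈ M := (memM _).mpr (Or.inl ⟨by norm_num, le_refl 1⟩)
          have hs : ((a.1 - 1, 0) : ℤ × ℤ) ∈ M := (memM _).mpr (Or.inl (by constructor <;> omega))
          rcases hsplit _ _ hr hs (by rw [Prod.ext_iff]; constructor <;> simp [h]) with hu | hu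
          · have := unit0 _ hu; simp [Prod.ext_iff] at this
          · have := unit0 _ hu; rw [Prod.ext_iff] at this; simp at this; omega
    · rintro (rfl | rfl)
      · refine ⟨(memM _).mpr (Or.inl (by norm_num)), not_unit _ (by simp [Prod.ext_iff]), ?_⟩
        intro r s hr hs heq
        rw [memM] at hr hs
        rw [Prod.ext_iff] at heq
        simp only [Prod.fst_add, Prod.snd_add] at heq
        have hr2 : r.2 = 0 := by omega
        have hs2 : s.2 = 0 := by omega
        have hr1 : 0 ≤ r.1 := by omega
        have hs1 : 0 ≤ s.1 := by omega
        rcases (by omega : r.1 = 0 ∨ s.1 = 0) with h | h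
        · left; rw [show r = 0 from Prod.ext h hr2]; exact zero_unit
        · right; rw [show s = 0 from Prod.ext h hs2]; exact zero_unit
      · refine ⟨(memM _).mpr (Or.inl (by norm_num)), not_unit _ (by simp [Prod.ext_iff]), ?_⟩
        intro r s hr hs heq
        rw [memM] at hr hs
        rw [Prod.ext_iff] at heq
        simp only [Prod.fst_add, Prod.snd_add] at heq
        rcases (by omega : (r.1 = 0 ∧ r.2 = 0) ∨ (s.1 = 0 ∧ s.2 = 0)) with h | h
        · left; rw [show r = 0 from Prod.ext h.1 h.2]; exact zero_unit
        · right; rw [show s = 0 from Prod.ext h.1 h.2]; exact zero_unit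
  -- atomic elements
  have atomic_eq : (AtomicElems M : Set (ℤ × ℤ)) = {p : ℤ × ℤ | 0 ≤ p.2 ∧ p.2 ≤ p.1} := by
    ext p
    rw [SetLike.mem_coe]
    unfold AtomicElems
    rw [atoms_eq]
    exact mem_cl_iff p
  have mem_atomic : ∀ p : ℤ × ℤ, p ∈ AtomicElems M ↔ 0 ≤ p.2 ∧ p.2 ≤ p.1 := by
    intro p
    rw [← SetLike.mem_coe, atomic_eq]
    rfl
  refine ⟨fun x _ h => unit0 x h, atoms_eq, atomic_eq, ?_, ?_⟩
  · -- almost atomic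
    intro b hb _
    rw [memM] at hb
    refine ⟨(max 0 (b.2 - b.1), 0), ?_, ?_⟩
    · rw [mem_atomic]; simp
    · rw [mem_atomic]
      simp only [Prod.fst_add, Prod.snd_add]
      omega
  · -- not nearly atomic
    rintro ⟨b, hb, hall⟩
    rw [memM] at hb
    have hm : ((-b.1, 2) : ℤ × ℤ) ∈ M := (memM _).mpr (Or.inr (by norm_num))
    have := hall _ hm
    rw [mem_atomic] at this
    simp only [Prod.fst_add, Prod.snd_add] at this
    omega
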